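/- arXiv:1506.04725 — 3 statements merged into one kernel-verified Lean document; each statement's English description precedes it below -/
import Mathlib

section
/- For w > 0, the function f_w(t) = max(1 - w·|t|, 0) is a characteristic function of some probability measure on ℝ (Polya's criterion instance): there exists a probability measure P_w on ℝ whose characteristic function equals f_w. -/
open MeasureTheory Complex
open Real
open scoped ENNReal NNReal

noncomputable def polyaG (b : ℝ) (x : ℝ) : ℝ :=
  if x = 0 then 1/b else b * (1 - Real.cos (2*π*x/b)) / (2*π^2*x^2)

lemma polyaG_nonneg {b : ℝ} (hb : 0 < b) (x : ℝ) : 0 ≤ polyaG b x := by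
  unfold polyaG
  split_ifs with h
  · positivity
  · have h1 : Real.cos (2*π*x/b) ≤ 1 := Real.cos_le_one _
    have h2 : (0:ℝ) < 2*π^2*x^2 := by positivity
    apply div_nonneg _ h2.le
    nlinarith

lemma polyaG_le {b : ℝ} (hb : 0 < b) (x : ℝ) :
    polyaG b x ≤ (1/b + b/π^2) * (1 + x^2)⁻¹ := by
  have hπ : (0:ℝ) < π := Real.pi_pos
  have key1 : polyaG b x ≤ 1/b := by
    unfold polyaG
    split_ifs with h
    · exact le_refl _
    · have hx2 : (0:ℝ) < 2*π^2*x^2 := by positivity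
      rw [div_le_div_iff₀ hx2 hb]
      have h := Real.one_sub_sq_div_two_le_cos (x := 2*π*x/b)
      have e : (2*π*x/b)^2/2 = 2*π^2*x^2/b^2 := by ring
      rw [e] at h
      calc b * (1 - Real.cos (2*π*x/b)) * b = b^2 * (1 - Real.cos (2*π*x/b)) := by ring
        _ ≤ b^2 * (2*π^2*x^2/b^2) := by gcongr; linarith
        _ = 1 * (2*π^2*x^2) := by field_simp
  have key2 : polyaG b x * x^2 ≤ b/π^2 := by
    unfold polyaG
    split_ifs with h
    · have : (0:ℝ) ≤ b/π^2 := by positivity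
      simpa [h] using this
    · have hx2 : (x:ℝ)^2 ≠ 0 := pow_ne_zero _ h
      have e : b * (1 - Real.cos (2*π*x/b)) / (2*π^2*x^2) * x^2
          = b * (1 - Real.cos (2*π*x/b)) / (2*π^2) := by
        field_simp
      rw [e, div_le_div_iff₀ (by positivity) (by positivity)]
      have h2 := Real.neg_one_le_cos (2*π*x/b)
      nlinarith [mul_le_mul_of_nonneg_left (show 1 - Real.cos (2*π*x/b) ≤ 2 by linarith)
        (show (0:ℝ) ≤ b*π^2 by positivity)]
  rw [show (1/b + b/π^2) * (1+x^2)⁻¹ = (1/b + b/π^2)/(1+x^2) by ring,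
    le_div_iff₀ (by positivity)]
  nlinarith [key1, key2]

lemma polyaG_measurable (b : ℝ) : Measurable (polyaG b) := by
  unfold polyaG
  apply Measurable.ite (measurableSet_singleton 0) measurable_const
  fun_prop

lemma polyaG_integrable {b : ℝ} (hb : 0 < b) : Integrable (polyaG b) := by
  apply (integrable_inv_one_add_sq.const_mul (1/b + b/π^2)).mono'
    (polyaG_measurable b).aestronglyMeasurable
  filter_upwards with x
  rw [Real.norm_eq_abs, _root_.abs_of_nonneg (polyaG_nonneg hb x)]
  exact polyaG_le hb x

lemma tent_continuous (b : ℝ) : Continuous (fun u : ℝ => ((max (1 - b*|u|) 0 : ℝ) : ℂ)) := by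
  fun_prop

lemma tent_integrable {b : ℝ} (hb : 0 < b) :
    Integrable (fun u : ℝ => ((max (1 - b*|u|) 0 : ℝ) : ℂ)) := by
  apply (tent_continuous b).integrable_of_hasCompactSupport
  apply HasCompactSupport.intro (isCompact_Icc (a := -(1/b)) (b := 1/b))
  intro u hu
  simp only [Set.mem_Icc, not_and_or, not_le] at hu
  have h1 : 1/b < |u| := by
    rcases hu with h | h
    · calc 1/b < -u := by linarith
        _ ≤ |u| := neg_le_abs u
    · exact h.trans_le (le_abs_self u)
  have h2 : 1 < |u| * b := (div_lt_iff₀ hb).mp h1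
  have : 1 - b * |u| ≤ 0 := by nlinarith
  simp [max_eq_right this]

lemma hE (c : ℝ) (x : ℝ) : HasDerivAt (fun x : ℝ => Complex.exp ((c:ℂ)*x*Complex.I))
    ((c:ℂ)*Complex.I*Complex.exp ((c:ℂ)*x*Complex.I)) x := by
  have h1 : HasDerivAt (fun x : ℝ => ((c:ℂ)*x*Complex.I)) ((c:ℂ)*Complex.I) x := by
    simpa using ((Complex.ofRealCLM.hasDerivAt (x := x)).const_mul (c:ℂ)).mul_const Complex.I
  simpa [mul_comm] using h1.cexp

lemma aux_key {b c : ℝ} (hb : 0 < b) (hc : c ≠ 0) :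
    ∫ x in (0:ℝ)..(1/b), (1 - (b:ℂ)*x) * Complex.exp (c*x*Complex.I)
      = -b * Complex.exp ((c/b : ℝ)*Complex.I) / c^2 + Complex.I/c + b/c^2 := by
  have hbc : (b:ℂ) ≠ 0 := by exact_mod_cast hb.ne'
  have hcc : (c:ℂ) ≠ 0 := by exact_mod_cast hc
  have h2 : ∀ x : ℝ, HasDerivAt (fun x : ℝ => (1 - (b:ℂ)*x)) (-(b:ℂ)) x := fun x => by
    simpa using (((Complex.ofRealCLM.hasDerivAt (x := x)).const_mul (b:ℂ)).const_sub 1)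
  have hF : ∀ x : ℝ, HasDerivAt
      (fun x : ℝ => -Complex.I*(1-(b:ℂ)*x)*Complex.exp (c*x*Complex.I)/c
        - b*Complex.exp (c*x*Complex.I)/c^2)
      ((1 - (b:ℂ)*x) * Complex.exp (c*x*Complex.I)) x := by
    intro x
    have h3 := ((((h2 x).mul (hE c x)).const_mul (-Complex.I)).div_const (c:ℂ)).sub
      (((hE c x).const_mul (b:ℂ)).div_const ((c:ℂ)^2))
    convert h3 using 1
    · rfl
    · ext y; simp only [Pi.sub_apply, Pi.mul_apply]; ring
    · rw [div_sub_div _ _ hcc (pow_ne_zero 2 hcc), eq_div_iff (mul_ne_zero hcc (pow_ne_zero 2 hcc))]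
      linear_combination ((1 - (b:ℂ)*x) * Complex.exp (c*x*Complex.I) * (c:ℂ)^3) * Complex.I_sq
  rw [intervalIntegral.integral_eq_sub_of_hasDerivAt (fun x _ => hF x)
    (by apply Continuous.intervalIntegrable; fun_prop)]
  have e1 : ((1/b : ℝ) : ℂ) = 1/(b:ℂ) := by push_cast; ring
  have e2 : ((c/b : ℝ) : ℂ) = (c:ℂ)/b := by push_cast; ring
  rw [e1, e2]
  have e3 : (c:ℂ) * (1/(b:ℂ)) = (c:ℂ)/b := by ring
  rw [e3]
  field_simp
  simp
  ring

lemma aux_key0 {b : ℝ} (hb : 0 < b) :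
    ∫ x in (0:ℝ)..(1/b), (1 - (b:ℂ)*x) = 1/(2*(b:ℂ)) := by
  have hbc : (b:ℂ) ≠ 0 := by exact_mod_cast hb.ne'
  have hF : ∀ x : ℝ, HasDerivAt (fun x : ℝ => (x:ℂ) - (b:ℂ)/2*(x:ℂ)^2) (1 - (b:ℂ)*x) x := by
    intro x
    have h0 : HasDerivAt (fun x : ℝ => (x:ℂ)) 1 x := by
      simpa using (hasDerivAt_id x).ofReal_comp
    have h1 : HasDerivAt (fun x : ℝ => ((x:ℂ))^2) (2*(x:ℂ)) x := by
      have := h0.mul h0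
      simp only [pow_two]
      exact this.congr_deriv (by ring)
    have := h0.sub (h1.const_mul ((b:ℂ)/2))
    exact this.congr_deriv (by ring)
  rw [intervalIntegral.integral_eq_sub_of_hasDerivAt (fun x _ => hF x)
    (by apply Continuous.intervalIntegrable; fun_prop)]
  push_cast
  field_simp
  ring

open FourierTransform in
lemma fourier_tent {b : ℝ} (hb : 0 < b) (ξ : ℝ) :
    𝓕 (fun u : ℝ => ((max (1 - b*|u|) 0 : ℝ) : ℂ)) ξ = (polyaG b ξ : ℂ) := by
  have hbc : (b:ℂ) ≠ 0 := by exact_mod_cast hb.ne'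
  set A : ℝ := 1/b with hA
  have hA0 : 0 < A := by positivity
  rw [Real.fourier_real_eq_integral_exp_smul]
  set c : ℝ := -(2*π*ξ) with hc
  have hexp : ∀ v : ℝ, Complex.exp (↑(-2 * π * v * ξ) * Complex.I)
      • ((max (1 - b*|v|) 0 : ℝ) : ℂ)
      = ((max (1 - b*|v|) 0 : ℝ) : ℂ) * Complex.exp (↑c * ↑v * Complex.I) := by
    intro v
    rw [smul_eq_mul, mul_comm]
    congr 2
    push_cast [hc]
    ring
  simp only [hexp]
  have hsupp : ∀ x : ℝ, x ∉ Set.Ioc (-A) A →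
      ((max (1 - b*|x|) 0 : ℝ) : ℂ) * Complex.exp (↑c * ↑x * Complex.I) = 0 := by
    intro x hx
    simp only [Set.mem_Ioc, not_and_or, not_lt, not_le] at hx
    have h1 : 1 - b * |x| ≤ 0 := by
      rcases hx with h | h
      · have : A ≤ |x| := (le_abs.mpr (Or.inr (by linarith)))
        rw [hA] at this
        have := (div_le_iff₀ hb).mp this
        nlinarith [abs_nonneg x]
      · have : A ≤ |x| := le_trans h.le (le_abs_self x)
        rw [hA] at this
        have := (div_le_iff₀ hb).mp this
        nlinarith [abs_nonneg x]
    simp [max_eq_right h1]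
  rw [← MeasureTheory.setIntegral_eq_integral_of_forall_compl_eq_zero hsupp,
    ← intervalIntegral.integral_of_le (by linarith : -A ≤ A),
    ← intervalIntegral.integral_add_adjacent_intervals (a := -A) (b := 0) (c := A)
      (by apply Continuous.intervalIntegrable; fun_prop)
      (by apply Continuous.intervalIntegrable; fun_prop)]
  have hp2 : (∫ x in (0:ℝ)..A, ((max (1 - b*|x|) 0 : ℝ) : ℂ) * Complex.exp (↑c * ↑x * Complex.I))
      = ∫ x in (0:ℝ)..A, (1 - (b:ℂ)*x) * Complex.exp (↑c * ↑x * Complex.I) := by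
    apply intervalIntegral.integral_congr
    intro x hx
    rw [Set.uIcc_of_le hA0.le, Set.mem_Icc] at hx
    have h1 : |x| = x := abs_of_nonneg hx.1
    have h2 : 0 ≤ 1 - b * x := by
      have h3 : x * b ≤ 1 := (le_div_iff₀ hb).mp (hx.2.trans_eq hA)
      nlinarith
    simp only [h1, max_eq_left h2]
    push_cast
    ring
  have hp1 : (∫ x in (-A)..(0:ℝ), ((max (1 - b*|x|) 0 : ℝ) : ℂ) * Complex.exp (↑c * ↑x * Complex.I))
      = ∫ x in (0:ℝ)..A, (1 - (b:ℂ)*x) * Complex.exp (↑(-c) * ↑x * Complex.I) := by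
    have := intervalIntegral.integral_comp_neg (a := (0:ℝ)) (b := A)
      (fun x => ((max (1 - b*|x|) 0 : ℝ) : ℂ) * Complex.exp (↑c * ↑x * Complex.I))
    rw [neg_zero] at this
    rw [← this]
    apply intervalIntegral.integral_congr
    intro x hx
    rw [Set.uIcc_of_le hA0.le, Set.mem_Icc] at hx
    have h1 : |(-x)| = x := by rw [abs_neg, _root_.abs_of_nonneg hx.1]
    have h2 : 0 ≤ 1 - b * x := by
      have h3 : x * b ≤ 1 := (le_div_iff₀ hb).mp (hx.2.trans_eq hA)
      nlinarith
    simp only [h1, max_eq_left h2]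
    push_cast
    ring_nf
  rw [hp1, hp2]
  by_cases hξ : ξ = 0
  · have hc0 : c = 0 := by rw [hc, hξ]; ring
    simp only [hc0, neg_zero, Complex.ofReal_zero, zero_mul, Complex.exp_zero, mul_one]
    rw [aux_key0 hb]
    have : polyaG b ξ = 1/b := by rw [hξ, polyaG, if_pos rfl]
    rw [this]
    push_cast
    field_simp
    norm_num
  · have hc' : c ≠ 0 := by
      rw [hc]
      simp only [neg_ne_zero]
      positivity
    rw [aux_key hb hc', aux_key hb (neg_ne_zero.mpr hc')]
    have hξc : (ξ:ℂ) ≠ 0 := by exact_mod_cast hξ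
    have hπc : (π:ℂ) ≠ 0 := by exact_mod_cast Real.pi_ne_zero
    have : polyaG b ξ = b * (1 - Real.cos (2*π*ξ/b)) / (2*π^2*ξ^2) := by
      rw [polyaG, if_neg hξ]
    rw [this, hc]
    rw [Complex.exp_mul_I, Complex.exp_mul_I]
    push_cast
    simp only [Complex.cos_neg, Complex.sin_neg, neg_div, Complex.cos_neg]
    field_simp
    ring_nf


open FourierTransform in
lemma polyaG_charfun {b : ℝ} (hb : 0 < b) (s : ℝ) :
    (∫ x : ℝ, Complex.exp (↑s * ↑x * Complex.I) * ((polyaG b x : ℝ) : ℂ))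
      = ((max (1 - b * |s/(2*π)|) 0 : ℝ) : ℂ) := by
  have hFg : 𝓕 (fun u : ℝ => ((max (1 - b*|u|) 0 : ℝ) : ℂ)) = fun ξ => ((polyaG b ξ : ℝ) : ℂ) :=
    funext (fourier_tent hb)
  have hint : Integrable (fun ξ : ℝ => ((polyaG b ξ : ℝ) : ℂ)) := (polyaG_integrable hb).ofReal
  have h'f : Integrable (𝓕 (fun u : ℝ => ((max (1 - b*|u|) 0 : ℝ) : ℂ))) := by
    rw [hFg]; exact hint
  have hinv := (tent_integrable hb).fourierInv_fourier_eq h'f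
    ((tent_continuous b).continuousAt (x := s/(2*π)))
  rw [hFg, Real.fourierInv_eq_fourier_neg,
    Real.fourier_real_eq_integral_exp_smul] at hinv
  rw [← hinv]
  apply MeasureTheory.integral_congr_ae
  filter_upwards with x
  have hπ : (π:ℝ) ≠ 0 := Real.pi_ne_zero
  have harg : (↑(-2 * π * x * -(s / (2 * π))) : ℂ) * Complex.I = ↑s * ↑x * Complex.I := by
    have : -2 * π * x * -(s / (2 * π)) = s * x := by field_simp
    rw [this]
    push_cast
    ring
  rw [smul_eq_mul, harg]

/-- Polya's criterion instance: for `w > 0`, the function `t ↦ max (1 - w·|t|) 0` is the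
characteristic function of some probability measure on ℝ. -/
theorem polya_tent_is_charFun (w : ℝ) (hw : 0 < w) :
    ∃ P : Measure ℝ, IsProbabilityMeasure P ∧
      ∀ t : ℝ, (∫ x : ℝ, Complex.exp (t * x * Complex.I) ∂P) = (max (1 - w * |t|) 0 : ℝ) := by
  have hπ := Real.pi_pos
  set b : ℝ := 2*π*w with hbdef
  have hb : 0 < b := by positivity
  have key : ∀ t : ℝ, (∫ x : ℝ, Complex.exp (↑t * ↑x * Complex.I) * ((polyaG b x : ℝ) : ℂ))
      = ((max (1 - w * |t|) 0 : ℝ) : ℂ) := by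
    intro t
    rw [polyaG_charfun hb t]
    congr 2
    rw [abs_div, abs_of_pos (by positivity : (0:ℝ) < 2*π), hbdef]
    field_simp
  have hmass : ∫ x : ℝ, polyaG b x = 1 := by
    have h0 := key 0
    simp only [Complex.ofReal_zero, zero_mul, Complex.exp_zero, one_mul, abs_zero,
      mul_zero, sub_zero, max_eq_left zero_le_one] at h0
    have h1 : (∫ x : ℝ, ((polyaG b x : ℝ) : ℂ)) = ((∫ x : ℝ, polyaG b x : ℝ) : ℂ) := by
      simpa using integral_ofReal (𝕜 := ℂ) (f := polyaG b)
    rw [h1] at h0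
    exact_mod_cast h0
  refine ⟨volume.withDensity (fun x => ENNReal.ofReal (polyaG b x)), ⟨?_⟩, ?_⟩
  · rw [withDensity_apply _ MeasurableSet.univ, setLIntegral_univ,
      ← ofReal_integral_eq_lintegral_ofReal (polyaG_integrable hb)
        (Filter.Eventually.of_forall (polyaG_nonneg hb)), hmass]
    simp
  · intro t
    have heq : (volume.withDensity (fun x => ENNReal.ofReal (polyaG b x)))
        = volume.withDensity (fun x => ((polyaG b x).toNNReal : ℝ≥0∞)) := rfl
    rw [heq, integral_withDensity_eq_integral_smul ((polyaG_measurable b).real_toNNReal)]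
    rw [← key t]
    apply MeasureTheory.integral_congr_ae
    filter_upwards with x
    rw [NNReal.smul_def, Real.coe_toNNReal _ (polyaG_nonneg hb x), Complex.real_smul, mul_comm]
end

section
/- Let Λ be an injective map from a set M of probability measures on ℝᵈ into the set of continuous functions ℝᵈ → ℝ such that for P ≠ Q the function ΛP - ΛQ is analytic and not identically zero. Let T₁,…,T_J be i.i.d. with absolutely continuous law. Define d(P,Q)² = Σ_j |ΛP(T_j) - ΛQ(T_j)|². Then almost surely: d(P,Q) = 0 iff P = Q, d(P,Q) = d(Q,P), and d(P,Q) ≤ d(P,R) + d(R,Q) for any fixed P, Q, R ∈ M. -/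
open MeasureTheory ProbabilityTheory Filter Topology

lemma analytic_zero_null_1d (f : ℝ → ℝ) (hf : AnalyticOnNhd ℝ f Set.univ) (hne : f ≠ 0) :
    volume {x | f x = 0} = 0 := by
  have hcount : {x | f x = 0}.Countable := by
    rw [← Set.countable_coe_iff]
    have hdisc : DiscreteTopology ({x | f x = 0} : Set ℝ) := by
      rw [discreteTopology_subtype_iff]
      intro x hx
      rcases (hf x (Set.mem_univ x)).eventually_eq_zero_or_eventually_ne_zero with h | h
      · exact absurd (funext fun y =>
          hf.eqOn_zero_of_preconnected_of_eventuallyEq_zero isPreconnected_univ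
            (Set.mem_univ x) h (Set.mem_univ y)) hne
      · rw [inf_principal_eq_bot]
        exact h
    exact TopologicalSpace.separableSpace_iff_countable.mp inferInstance
  exact hcount.measure_zero _

lemma analytic_zero_null_pi : ∀ (n : ℕ) (f : (Fin n → ℝ) → ℝ),
    AnalyticOnNhd ℝ f Set.univ → f ≠ 0 → volume {x | f x = 0} = 0 := by
  intro n
  induction n with
  | zero =>
    intro f hf hne
    obtain ⟨x, hx⟩ := Function.ne_iff.mp hne
    have : {x : Fin 0 → ℝ | f x = 0} = ∅ := by
      ext y
      simp only [Set.mem_setOf_eq, Set.mem_empty_iff_false, iff_false]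
      rwa [Subsingleton.elim y x]
    rw [this, measure_empty]
  | succ n ih =>
    intro f hf hne
    set e := MeasurableEquiv.piFinSuccAbove (fun _ : Fin (n + 1) => ℝ) 0 with he
    set F : ℝ × (Fin n → ℝ) → ℝ := fun p => f (e.symm p) with hFdef
    -- the inverse of `e` is a continuous linear map, so `F` is analytic
    have hsymm_eq : ∀ p : ℝ × (Fin n → ℝ), e.symm p =
        Fin.insertNth (α := fun _ : Fin (n + 1) => ℝ) 0 p.1 p.2 := fun p => rfl
    have hmapadd : ∀ p q : ℝ × (Fin n → ℝ), e.symm (p + q) = e.symm p + e.symm q := by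
      intro p q
      rw [hsymm_eq, hsymm_eq, hsymm_eq]
      exact Fin.insertNth_add (α := fun _ : Fin (n + 1) => ℝ) 0 p.1 q.1 p.2 q.2
    have hmapsmul : ∀ (c : ℝ) (p : ℝ × (Fin n → ℝ)), e.symm (c • p) = c • e.symm p := by
      intro c p
      rw [hsymm_eq, hsymm_eq]
      funext j
      refine Fin.succAboveCases 0 ?_ ?_ j
      · simp
      · intro i
        simp [Fin.insertNth_apply_succAbove]
    let L : (ℝ × (Fin n → ℝ)) →ₗ[ℝ] (Fin (n + 1) → ℝ) :=
      { toFun := fun p => e.symm p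
        map_add' := hmapadd
        map_smul' := hmapsmul }
    have hF : AnalyticOnNhd ℝ F Set.univ := by
      have h1 : AnalyticOnNhd ℝ (⇑(LinearMap.toContinuousLinearMap L)) Set.univ :=
        ContinuousLinearMap.analyticOnNhd _ _
      exact hf.comp h1 (Set.mapsTo_univ _ _)
    have hFc : Continuous F := continuousOn_univ.mp hF.continuousOn
    by_cases hall : ∀ t x', F (t, x') = 0
    · refine absurd (funext fun x => ?_) hne
      have h := hall (e x).1 (e x).2
      simpa [hFdef] using h
    · push_neg at hall
      obtain ⟨t₀, x₀, h₀⟩ := hall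
      -- slice maps are analytic
      have hslice1 : ∀ x' : Fin n → ℝ, AnalyticOnNhd ℝ (fun t : ℝ => F (t, x')) Set.univ :=
        fun x' => hF.comp (analyticOnNhd_id.prod analyticOnNhd_const) (Set.mapsTo_univ _ _)
      have hslice2 : AnalyticOnNhd ℝ (fun x' : Fin n → ℝ => F (t₀, x')) Set.univ :=
        hF.comp (analyticOnNhd_const.prod analyticOnNhd_id) (Set.mapsTo_univ _ _)
      have hA : volume {x' : Fin n → ℝ | F (t₀, x') = 0} = 0 :=
        ih _ hslice2 (Function.ne_iff.mpr ⟨x₀, h₀⟩)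
      -- measurability of the zero sets
      have hS : MeasurableSet {p : ℝ × (Fin n → ℝ) | F p = 0} :=
        hFc.measurable (measurableSet_singleton 0)
      have hS' : MeasurableSet {q : (Fin n → ℝ) × ℝ | F (q.2, q.1) = 0} :=
        (hFc.comp (continuous_snd.prodMk continuous_fst)).measurable (measurableSet_singleton 0)
      -- Fubini: the zero set of `F` is null
      have hSnull : (volume : Measure (ℝ × (Fin n → ℝ))) {p | F p = 0} = 0 := by
        rw [Measure.volume_eq_prod, ← Measure.prod_swap,
          Measure.map_apply measurable_swap hS]
        have hpre : Prod.swap ⁻¹' {p : ℝ × (Fin n → ℝ) | F p = 0}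
            = {q : (Fin n → ℝ) × ℝ | F (q.2, q.1) = 0} := rfl
        rw [hpre, Measure.measure_prod_null hS']
        have hAe := measure_eq_zero_iff_ae_notMem.mp hA
        filter_upwards [hAe] with x' hx'
        have : (Prod.mk x' ⁻¹' {q : (Fin n → ℝ) × ℝ | F (q.2, q.1) = 0})
            = {t : ℝ | F (t, x') = 0} := rfl
        rw [this]
        exact analytic_zero_null_1d _ (hslice1 x') (Function.ne_iff.mpr ⟨t₀, hx'⟩)
      -- transfer back through the measure-preserving equivalence
      have hZ : {x : Fin (n + 1) → ℝ | f x = 0} = e ⁻¹' {p | F p = 0} := by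
        ext x
        simp only [Set.mem_setOf_eq, Set.mem_preimage, hFdef, Prod.mk.eta, e.symm_apply_apply]
      rw [hZ]
      have hmp2 := MeasureTheory.volume_preserving_piFinSuccAbove (fun _ : Fin (n + 1) => ℝ) 0
      rw [hmp2.measure_preimage hS.nullMeasurableSet]
      exact hSnull

lemma analytic_zero_null_euclidean {d : ℕ} (f : EuclideanSpace ℝ (Fin d) → ℝ)
    (hf : AnalyticOnNhd ℝ f Set.univ) (hne : f ≠ 0) : volume {x | f x = 0} = 0 := by
  have hmp := EuclideanSpace.volume_preserving_symm_measurableEquiv_toLp (Fin d)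
  set e := (MeasurableEquiv.toLp 2 (Fin d → ℝ)).symm with he
  set g : (Fin d → ℝ) → ℝ := fun y => f (e.symm y) with hgdef
  have hg : AnalyticOnNhd ℝ g Set.univ := by
    have h1 : AnalyticOnNhd ℝ
        (⇑((EuclideanSpace.equiv (Fin d) ℝ).symm.toContinuousLinearMap)) Set.univ :=
      ContinuousLinearMap.analyticOnNhd _ _
    exact hf.comp h1 (Set.mapsTo_univ _ _)
  have hgc : Continuous g := continuousOn_univ.mp hg.continuousOn
  have hgne : g ≠ 0 := by
    obtain ⟨x, hx⟩ := Function.ne_iff.mp hne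
    refine Function.ne_iff.mpr ⟨e x, ?_⟩
    simpa [hgdef, e.symm_apply_apply] using hx
  have hZ : {x : EuclideanSpace ℝ (Fin d) | f x = 0} = e ⁻¹' {y | g y = 0} := by
    ext x
    simp [hgdef, e.symm_apply_apply]
  rw [hZ]
  have hgS : MeasurableSet {y : Fin d → ℝ | g y = 0} := hgc.measurable (measurableSet_singleton 0)
  rw [hmp.measure_preimage hgS.nullMeasurableSet]
  exact analytic_zero_null_pi d g hg hgne

/-- Random-metric lemma: if `Λ` maps a set of probability measures injectively into
analytic functions (differences of distinct images being analytic and not identically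
zero), and `T 1, …, T J` are i.i.d. with absolutely continuous law, then the random
quantity `d(P,Q) = (∑ j (ΛP(T j) - ΛQ(T j))²)^½` is almost surely a metric:
`d(P,Q) = 0` iff `P = Q`, symmetry, and the triangle inequality. -/
theorem random_metric_of_analytic_injection
    {d : ℕ} {Ω : Type*} [MeasurableSpace Ω] (Pr : Measure Ω) [IsProbabilityMeasure Pr]
    (M : Set (Measure (EuclideanSpace ℝ (Fin d))))
    (hMprob : ∀ P ∈ M, IsProbabilityMeasure P)
    (Λ : Measure (EuclideanSpace ℝ (Fin d)) → EuclideanSpace ℝ (Fin d) → ℝ)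
    (hinj : ∀ P ∈ M, ∀ Q ∈ M, Λ P = Λ Q → P = Q)
    (hanal : ∀ P ∈ M, ∀ Q ∈ M, P ≠ Q →
      AnalyticOnNhd ℝ (fun x => Λ P x - Λ Q x) Set.univ ∧
      (fun x => Λ P x - Λ Q x) ≠ 0)
    (μ : Measure (EuclideanSpace ℝ (Fin d))) [IsProbabilityMeasure μ] (hμ : μ ≪ volume)
    (J : ℕ) (hJ : 0 < J)
    (T : Fin J → Ω → EuclideanSpace ℝ (Fin d))
    (hmeas : ∀ j, Measurable (T j))
    (hindep : iIndepFun T Pr)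
    (hlaw : ∀ j, Measure.map (T j) Pr = μ)
    (D : Measure (EuclideanSpace ℝ (Fin d)) → Measure (EuclideanSpace ℝ (Fin d)) → Ω → ℝ)
    (hD : ∀ P Q ω, D P Q ω = Real.sqrt (∑ j : Fin J, (Λ P (T j ω) - Λ Q (T j ω)) ^ 2))
    (P Q R : Measure (EuclideanSpace ℝ (Fin d))) (hP : P ∈ M) (hQ : Q ∈ M) (hR : R ∈ M) :
    ∀ᵐ ω ∂Pr, (D P Q ω = 0 ↔ P = Q) ∧
      D P Q ω = D Q P ω ∧
      D P Q ω ≤ D P R ω + D R Q ω := by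
  -- express `D` through the euclidean distance in `ℝ^J`
  have key : ∀ (A B : Measure (EuclideanSpace ℝ (Fin d))) (ω : Ω),
      D A B ω = dist ((WithLp.equiv 2 (Fin J → ℝ)).symm (fun j => Λ A (T j ω)))
        ((WithLp.equiv 2 (Fin J → ℝ)).symm (fun j => Λ B (T j ω))) := by
    intro A B ω
    rw [hD, EuclideanSpace.dist_eq]
    congr 1
    refine Finset.sum_congr rfl fun j _ => ?_
    simp [Real.dist_eq, sq_abs]
  have hsym : ∀ ω, D P Q ω = D Q P ω := fun ω => by
    rw [key, key, dist_comm]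
  have htri : ∀ ω, D P Q ω ≤ D P R ω + D R Q ω := fun ω => by
    rw [key, key, key]
    exact dist_triangle _ _ _
  by_cases hPQ : P = Q
  · refine Filter.Eventually.of_forall fun ω => ⟨?_, hsym ω, htri ω⟩
    subst hPQ
    simp [hD]
  · -- the difference function is analytic and nonzero, so its zero set is null
    obtain ⟨hfa, hfne⟩ := hanal P hP Q hQ hPQ
    set f : EuclideanSpace ℝ (Fin d) → ℝ := fun x => Λ P x - Λ Q x with hfdef
    have hnull : volume {x | f x = 0} = 0 := analytic_zero_null_euclidean f hfa hfne
    have hμnull : μ {x | f x = 0} = 0 := hμ hnull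
    set j₀ : Fin J := ⟨0, hJ⟩ with hj₀
    have hfc : Continuous f := continuousOn_univ.mp hfa.continuousOn
    have hNmeas : MeasurableSet {x : EuclideanSpace ℝ (Fin d) | f x = 0} :=
      hfc.measurable (measurableSet_singleton 0)
    have hPrnull : Pr {ω | f (T j₀ ω) = 0} = 0 := by
      have : {ω | f (T j₀ ω) = 0} = T j₀ ⁻¹' {x | f x = 0} := rfl
      rw [this, ← Measure.map_apply (hmeas j₀) hNmeas, hlaw j₀]
      exact hμnull
    have hae := measure_eq_zero_iff_ae_notMem.mp hPrnull
    filter_upwards [hae] with ω hω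
    refine ⟨?_, hsym ω, htri ω⟩
    have hpos : 0 < D P Q ω := by
      rw [hD]
      apply Real.sqrt_pos.mpr
      refine Finset.sum_pos' (fun i _ => sq_nonneg _) ⟨j₀, Finset.mem_univ _, ?_⟩
      simpa [sq_abs] using pow_pos (abs_pos.mpr hω) 2
    exact ⟨fun h => absurd h hpos.ne', fun h => absurd h hPQ⟩
end

section
/- Let k be a translation-invariant kernel k(x,y) = κ(x−y) on ℝ with κ integrable, continuous, and with nonnegative integrable Fourier transform F⁻¹κ. Then for probability measures P, Q with integrable characteristic functions, MMD²(P,Q) := ∫∫ κ(x−y) d(P−Q)(x) d(P−Q)(y) = ∫ |φ_P(t) − φ_Q(t)|² (F⁻¹κ)(t) dt. -/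
open MeasureTheory Complex

lemma aux_norm_exp (t x : ℝ) : ‖Complex.exp (t * x * Complex.I)‖ = 1 := by
  rw [show ((t:ℂ) * x * Complex.I) = ((t*x : ℝ) : ℂ) * Complex.I by push_cast; ring]
  exact Complex.norm_exp_ofReal_mul_I _

lemma aux_conj_exp (t y : ℝ) :
    (starRingEnd ℂ) (Complex.exp (t * y * Complex.I)) = Complex.exp (-(t * y * Complex.I)) := by
  rw [← Complex.exp_conj]
  congr 1
  simp [Complex.conj_I]

lemma aux_mp_snd (μ : Measure ℝ) [IsProbabilityMeasure μ] :
    MeasurePreserving Prod.snd (μ.prod (volume : Measure ℝ)) volume :=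
  ⟨measurable_snd, by simp⟩

lemma aux_main (μ ν : Measure ℝ) [IsProbabilityMeasure μ] [IsProbabilityMeasure ν]
    (κ p : ℝ → ℝ) (hpint : Integrable p volume)
    (hbochner : ∀ u : ℝ, (κ u : ℂ) = ∫ t : ℝ, Complex.exp (t * u * Complex.I) * p t ∂volume)
    (φμ φν : ℝ → ℂ)
    (hφμ : ∀ t, φμ t = ∫ x, Complex.exp (t * x * Complex.I) ∂μ)
    (hφν : ∀ t, φν t = ∫ x, Complex.exp (t * x * Complex.I) ∂ν)
    (hφνm : AEStronglyMeasurable φν volume) :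
    (∫ x, ∫ y, (κ (x - y) : ℂ) ∂ν ∂μ)
      = ∫ t : ℝ, φμ t * (starRingEnd ℂ) (φν t) * p t ∂volume := by
  have hbν : ∀ t, ‖φν t‖ ≤ 1 := by
    intro t
    rw [hφν]
    calc ‖∫ x, Complex.exp (t * x * Complex.I) ∂ν‖
        ≤ ∫ x, ‖Complex.exp (t * x * Complex.I)‖ ∂ν := norm_integral_le_integral_norm _
      _ = 1 := by
          simp only [show ∀ x:ℝ, ‖Complex.exp (↑t * ↑x * Complex.I)‖ = 1 from
            fun x => aux_norm_exp t x]
          simp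
  have habs : Integrable (fun z : ℝ × ℝ => |p z.2|) (μ.prod volume) :=
    ((aux_mp_snd μ).integrable_comp hpint.abs.aestronglyMeasurable).mpr hpint.abs
  have habsν : Integrable (fun z : ℝ × ℝ => |p z.2|) (ν.prod volume) :=
    ((aux_mp_snd ν).integrable_comp hpint.abs.aestronglyMeasurable).mpr hpint.abs
  have hpm : AEStronglyMeasurable p volume := hpint.aestronglyMeasurable
  have hconjm : AEStronglyMeasurable (fun t => (starRingEnd ℂ) (φν t)) volume := by
    exact Complex.continuous_conj.comp_aestronglyMeasurable hφνm
  -- step 1 : inner integral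
  have hinner : ∀ x : ℝ, (∫ y, (κ (x - y) : ℂ) ∂ν)
      = ∫ t : ℝ, Complex.exp (t * x * Complex.I) * ((starRingEnd ℂ) (φν t) * p t) ∂volume := by
    intro x
    simp only [hbochner]
    rw [integral_integral_swap]
    · congr 1
      ext t
      have hsplit : ∀ y : ℝ, Complex.exp (↑t * ↑(x - y) * Complex.I) * (p t : ℂ)
          = Complex.exp (t * x * Complex.I) * ((starRingEnd ℂ) (Complex.exp (t * y * Complex.I)) * p t) := by
        intro y
        rw [aux_conj_exp]
        rw [← mul_assoc, ← Complex.exp_add]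
        push_cast
        ring_nf
      simp only [hsplit]
      rw [integral_const_mul]
      congr 1
      rw [integral_mul_const, integral_conj, ← hφν]
    · -- integrability on ν.prod volume
      apply habsν.mono'
      · apply AEStronglyMeasurable.mul
        · apply Continuous.aestronglyMeasurable
          fun_prop
        · exact (Complex.continuous_ofReal.comp_aestronglyMeasurable
            (hpm.comp_quasiMeasurePreserving (aux_mp_snd ν).quasiMeasurePreserving))
      · filter_upwards with z
        simp only [Function.uncurry]
        rw [norm_mul, aux_norm_exp, one_mul, Complex.norm_real, Real.norm_eq_abs]
  simp only [hinner]
  rw [integral_integral_swap]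
  · congr 1
    ext t
    rw [integral_mul_const, ← hφμ]
    ring
  · apply habs.mono'
    · apply AEStronglyMeasurable.mul
      · apply Continuous.aestronglyMeasurable
        fun_prop
      · apply AEStronglyMeasurable.mul
        · exact hconjm.comp_quasiMeasurePreserving (aux_mp_snd μ).quasiMeasurePreserving
        · exact (Complex.continuous_ofReal.comp_aestronglyMeasurable
            (hpm.comp_quasiMeasurePreserving (aux_mp_snd μ).quasiMeasurePreserving))
    · filter_upwards with z
      simp only [Function.uncurry]
      rw [norm_mul, aux_norm_exp, one_mul, norm_mul, Complex.norm_real, Real.norm_eq_abs]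
      calc ‖(starRingEnd ℂ) (φν z.2)‖ * |p z.2| ≤ 1 * |p z.2| := by
            apply mul_le_mul_of_nonneg_right _ (abs_nonneg _)
            rw [RCLike.norm_conj]
            exact hbν z.2
        _ = |p z.2| := one_mul _

lemma aux_absbound (μ : Measure ℝ) [IsProbabilityMeasure μ] (φ : ℝ → ℂ)
    (hφ : ∀ t, φ t = ∫ x, Complex.exp (t * x * Complex.I) ∂μ) (t : ℝ) : ‖φ t‖ ≤ 1 := by
  rw [hφ]
  calc ‖∫ x, Complex.exp (t * x * Complex.I) ∂μ‖
      ≤ ∫ x, ‖Complex.exp (t * x * Complex.I)‖ ∂μ := norm_integral_le_integral_norm _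
    _ = 1 := by
        simp only [show ∀ x:ℝ, ‖Complex.exp (↑t * ↑x * Complex.I)‖ = 1 from
          fun x => aux_norm_exp t x]
        simp

/-- Bochner-type representation of the MMD: for a translation-invariant kernel
`κ(x−y)` with nonnegative integrable spectral density `p` (so that
`κ(u) = ∫ exp(itu) p(t) dt`), and probability measures `P`, `Q` with integrable
characteristic functions `φ_P`, `φ_Q`,
`MMD²(P,Q) = ∫ |φ_P(t) − φ_Q(t)|² p(t) dt`. -/
theorem mmd_sq_eq_integral_charFun_diff
    (P Q : Measure ℝ) [IsProbabilityMeasure P] [IsProbabilityMeasure Q]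
    (κ p : ℝ → ℝ) (hp : ∀ t, 0 ≤ p t) (hpint : Integrable p volume)
    (hbochner : ∀ u : ℝ, (κ u : ℂ) = ∫ t : ℝ, Complex.exp (t * u * Complex.I) * p t ∂volume)
    (φP φQ : ℝ → ℂ)
    (hφP : ∀ t, φP t = ∫ x, Complex.exp (t * x * Complex.I) ∂P)
    (hφQ : ∀ t, φQ t = ∫ x, Complex.exp (t * x * Complex.I) ∂Q)
    (hφPint : Integrable φP volume) (hφQint : Integrable φQ volume) :
    (∫ x, ∫ y, κ (x - y) ∂P ∂P) - 2 * (∫ x, ∫ y, κ (x - y) ∂Q ∂P)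
        + (∫ x, ∫ y, κ (x - y) ∂Q ∂Q)
      = ∫ t : ℝ, ‖φP t - φQ t‖ ^ 2 * p t ∂volume := by
  have hφPm := hφPint.aestronglyMeasurable
  have hφQm := hφQint.aestronglyMeasurable
  have hbP := aux_absbound P φP hφP
  have hbQ := aux_absbound Q φQ hφQ
  have hpm : AEStronglyMeasurable (fun t => ((p t : ℝ) : ℂ)) volume :=
    Complex.continuous_ofReal.comp_aestronglyMeasurable hpint.aestronglyMeasurable
  have hterm : ∀ (f g : ℝ → ℂ), AEStronglyMeasurable f volume →
      AEStronglyMeasurable g volume → (∀ t, ‖f t‖ ≤ 1) → (∀ t, ‖g t‖ ≤ 1) →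
      Integrable (fun t => f t * (starRingEnd ℂ) (g t) * (p t : ℂ)) volume := by
    intro f g hf hg hbf hbg
    apply hpint.abs.mono'
    · exact (hf.mul (Complex.continuous_conj.comp_aestronglyMeasurable hg)).mul hpm
    · filter_upwards with t
      rw [norm_mul, norm_mul, Complex.norm_real, Real.norm_eq_abs, RCLike.norm_conj]
      have h1 : ‖f t‖ * ‖g t‖ ≤ 1 := by
        calc ‖f t‖ * ‖g t‖ ≤ 1 * 1 := mul_le_mul (hbf t) (hbg t) (norm_nonneg _) zero_le_one
          _ = 1 := one_mul 1
      exact mul_le_of_le_one_left (abs_nonneg _) h1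
  have hPP := aux_main P P κ p hpint hbochner φP φP hφP hφP hφPm
  have hPQ := aux_main P Q κ p hpint hbochner φP φQ hφP hφQ hφQm
  have hQQ := aux_main Q Q κ p hpint hbochner φQ φQ hφQ hφQ hφQm
  have hcast : ∀ (μ ν : Measure ℝ), ((∫ x, ∫ y, κ (x - y) ∂ν ∂μ : ℝ) : ℂ)
      = ∫ x, ∫ y, (κ (x - y) : ℂ) ∂ν ∂μ := by
    intro μ ν
    calc ((∫ x, ∫ y, κ (x - y) ∂ν ∂μ : ℝ) : ℂ)
        = ∫ x, ((∫ y, κ (x - y) ∂ν : ℝ) : ℂ) ∂μ := integral_ofReal.symm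
      _ = ∫ x, ∫ y, (κ (x - y) : ℂ) ∂ν ∂μ := by
          congr 1
          ext x
          exact integral_ofReal.symm
  -- symmetry of the cross term
  have hIPQreal : (∫ t : ℝ, φP t * (starRingEnd ℂ) (φQ t) * p t ∂volume)
      = ((∫ x, ∫ y, κ (x - y) ∂Q ∂P : ℝ) : ℂ) := by rw [hcast P Q, hPQ]
  have hIQP : (∫ t : ℝ, φQ t * (starRingEnd ℂ) (φP t) * p t ∂volume)
      = (∫ t : ℝ, φP t * (starRingEnd ℂ) (φQ t) * p t ∂volume) := by
    have h2 : (∫ t : ℝ, φQ t * (starRingEnd ℂ) (φP t) * p t ∂volume)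
        = (starRingEnd ℂ) (∫ t : ℝ, φP t * (starRingEnd ℂ) (φQ t) * p t ∂volume) := by
      rw [← integral_conj]
      congr 1
      ext t
      simp only [map_mul, Complex.conj_conj, Complex.conj_ofReal]
      ring
    rw [h2, hIPQreal, Complex.conj_ofReal, ← hIPQreal]
  apply Complex.ofReal_injective
  rw [Complex.ofReal_add, Complex.ofReal_sub, Complex.ofReal_mul, Complex.ofReal_ofNat,
    hcast P P, hcast P Q, hcast Q Q, hPP, hPQ, hQQ,
    show ((∫ t : ℝ, ‖φP t - φQ t‖ ^ 2 * p t ∂volume : ℝ) : ℂ)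
        = ∫ t : ℝ, ((‖φP t - φQ t‖ ^ 2 * p t : ℝ) : ℂ) ∂volume from integral_ofReal.symm]
  have hIPP := hterm φP φP hφPm hφPm hbP hbP
  have hIPQ := hterm φP φQ hφPm hφQm hbP hbQ
  have hIQP2 := hterm φQ φP hφQm hφPm hbQ hbP
  have hIQQ := hterm φQ φQ hφQm hφQm hbQ hbQ
  have hexp : (∫ t : ℝ, ((‖φP t - φQ t‖ ^ 2 * p t : ℝ) : ℂ) ∂volume)
      = (∫ t : ℝ, φP t * (starRingEnd ℂ) (φP t) * p t ∂volume)
        - (∫ t : ℝ, φP t * (starRingEnd ℂ) (φQ t) * p t ∂volume)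
        - (∫ t : ℝ, φQ t * (starRingEnd ℂ) (φP t) * p t ∂volume)
        + (∫ t : ℝ, φQ t * (starRingEnd ℂ) (φQ t) * p t ∂volume) := by
    have hpt : (∫ t : ℝ, ((‖φP t - φQ t‖ ^ 2 * p t : ℝ) : ℂ) ∂volume)
        = ∫ t : ℝ, (φP t * (starRingEnd ℂ) (φP t) * p t
            - φP t * (starRingEnd ℂ) (φQ t) * p t
            - φQ t * (starRingEnd ℂ) (φP t) * p t
            + φQ t * (starRingEnd ℂ) (φQ t) * p t) ∂volume := by
      congr 1
      ext t
      have h1 : ((‖φP t - φQ t‖ ^ 2 * p t : ℝ) : ℂ)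
          = (φP t - φQ t) * (starRingEnd ℂ) (φP t - φQ t) * (p t : ℂ) := by
        rw [Complex.mul_conj, ← Complex.normSq_eq_norm_sq]
        push_cast
        ring
      rw [h1]
      simp only [map_sub]
      ring
    have h12 : Integrable (fun t => φP t * (starRingEnd ℂ) (φP t) * (p t : ℂ)
        - φP t * (starRingEnd ℂ) (φQ t) * (p t : ℂ)) volume := hIPP.sub hIPQ
    have h123 : Integrable (fun t => φP t * (starRingEnd ℂ) (φP t) * (p t : ℂ)
        - φP t * (starRingEnd ℂ) (φQ t) * (p t : ℂ)
        - φQ t * (starRingEnd ℂ) (φP t) * (p t : ℂ)) volume := h12.sub hIQP2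
    rw [hpt, integral_add h123 hIQQ, integral_sub h12 hIQP2, integral_sub hIPP hIPQ]
  rw [hexp, hIQP]
  ring
end
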